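/- Let a, b, k ∈ ℕ with a, b, k ≥ 1 and let ε ∈ (0, 1/4). Let Φ = (V, 𝒞) be a K_{a,b}-free CNF formula, let V_¬ ⊆ V be the set of its negative variables, and let τ ≥ 2b/ε be a real number. Suppose Q ⊆ V is a set of positive variables with |Q| ≥ k + a·(2k/ε)^b such that deg_Φ(v) ≥ τ for every v ∈ Q and deg_Φ(u) ≤ τ for every positive variable u ∉ Q. Then there exists Y ⊆ V_¬ ∪ Q with |Y| ≤ k and val_Φ(Y) ≥ (1 − ε)·OPT_{Φ,k}. -/

import Mathlib

/-- `Y` satisfies clause `C = (pos, neg)` iff `pos ∩ Y ≠ ∅` or `neg ⊈ Y`. -/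
def ClauseSat {α : Type*} [DecidableEq α] (Y : Finset α) (C : Finset α × Finset α) : Prop :=
  (C.1 ∩ Y).Nonempty ∨ ¬ C.2 ⊆ Y

instance {α : Type*} [DecidableEq α] (Y : Finset α) (C : Finset α × Finset α) :
    Decidable (ClauseSat Y C) := by
  unfold ClauseSat; infer_instance

/-- `val Φ Y`: number of clause occurrences (with multiplicity) satisfied by `Y`. -/
def cnfVal {α : Type*} [DecidableEq α] (𝒞 : Multiset (Finset α × Finset α))
    (Y : Finset α) : ℕ :=
  Multiset.countP (fun C => ClauseSat Y C) 𝒞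

/-- `OPT_{Φ,k}`: maximum of `val` over solutions `Y ⊆ V` with `|Y| ≤ k`. -/
def cnfOPT {α : Type*} [DecidableEq α] (V : Finset α)
    (𝒞 : Multiset (Finset α × Finset α)) (k : ℕ) : ℕ :=
  (V.powerset.filter (fun Y => Y.card ≤ k)).sup (cnfVal 𝒞)

/-- `deg_Φ(v)`: number of clause occurrences (with multiplicity) containing `v`. -/
def cnfDeg {α : Type*} [DecidableEq α] (𝒞 : Multiset (Finset α × Finset α)) (v : α) : ℕ :=
  Multiset.countP (fun C => v ∈ C.1 ∪ C.2) 𝒞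

/-- `Φ` is `K_{a,b}`-free: there are no `a` distinct variables and `b` clause
occurrences (a sub-multiset of size `b`) such that each of the variables occurs
in each of the clause occurrences. -/
def cnfKabFree {α : Type*} [DecidableEq α] (𝒞 : Multiset (Finset α × Finset α))
    (a b : ℕ) : Prop :=
  ¬ ∃ (S : Finset α) (T : Multiset (Finset α × Finset α)),
      S.card = a ∧ T ≤ 𝒞 ∧ Multiset.card T = b ∧ ∀ C ∈ T, ∀ v ∈ S, v ∈ C.1 ∪ C.2


section Helpers

variable {α β : Type*} [DecidableEq α]

lemma countP_or_le (p q : β → Prop) [DecidablePred p] [DecidablePred q] (s : Multiset β) :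
    Multiset.countP (fun x => p x ∨ q x) s ≤ Multiset.countP p s + Multiset.countP q s := by
  induction s using Multiset.induction with
  | empty => simp
  | cons a s ih =>
    simp only [Multiset.countP_cons]
    by_cases hp : p a <;> by_cases hq : q a <;> simp only [hp, hq, true_or, or_true,
      false_or, or_false, if_true, if_false, if_pos, if_neg, not_false_iff] <;> omega

lemma countP_imp_le (p q : β → Prop) [DecidablePred p] [DecidablePred q] (s : Multiset β)
    (h : ∀ x ∈ s, p x → q x) : Multiset.countP p s ≤ Multiset.countP q s := by
  induction s using Multiset.induction with
  | empty => simp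
  | cons a s ih =>
    simp only [Multiset.countP_cons]
    have h1 := ih (fun x hx => h x (Multiset.mem_cons_of_mem hx))
    have h2 := h a (Multiset.mem_cons_self a s)
    by_cases hp : p a
    · have := h2 hp
      simp only [hp, this, if_true]
      omega
    · simp only [hp, if_neg, if_false]
      split <;> omega

lemma countP_iff_eq (p q : β → Prop) [DecidablePred p] [DecidablePred q] (s : Multiset β)
    (h : ∀ x ∈ s, p x ↔ q x) : Multiset.countP p s = Multiset.countP q s :=
  le_antisymm (countP_imp_le p q s fun x hx => (h x hx).1)
    (countP_imp_le q p s fun x hx => (h x hx).2)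

lemma countP_or_disjoint (p q : β → Prop) [DecidablePred p] [DecidablePred q] (s : Multiset β)
    (h : ∀ x ∈ s, ¬ (p x ∧ q x)) :
    Multiset.countP (fun x => p x ∨ q x) s = Multiset.countP p s + Multiset.countP q s := by
  induction s using Multiset.induction with
  | empty => simp
  | cons a s ih =>
    simp only [Multiset.countP_cons]
    have h1 := ih (fun x hx => h x (Multiset.mem_cons_of_mem hx))
    have h2 := h a (Multiset.mem_cons_self a s)
    by_cases hp : p a <;> by_cases hq : q a
    · exact absurd ⟨hp, hq⟩ h2
    · rw [if_pos (Or.inl hp), if_pos hp, if_neg hq]; omega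
    · rw [if_pos (Or.inr hq), if_neg hp, if_pos hq]; omega
    · have hn : ¬ (p a ∨ q a) := by tauto
      rw [if_neg hn, if_neg hp, if_neg hq]; omega

lemma sat_insert {Y : Finset α} {w : α} {C : Finset α × Finset α} (hw : w ∉ C.2)
    (h : ClauseSat Y C) : ClauseSat (insert w Y) C := by
  rcases h with h | h
  · obtain ⟨x, hx⟩ := h
    rw [Finset.mem_inter] at hx
    exact Or.inl ⟨x, Finset.mem_inter.2 ⟨hx.1, Finset.mem_insert_of_mem hx.2⟩⟩
  · refine Or.inr fun hsub => h fun x hx => ?_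
    rcases Finset.mem_insert.1 (hsub hx) with rfl | hxY
    · exact absurd hx hw
    · exact hxY

lemma val_insert_ge (𝒞 : Multiset (Finset α × Finset α)) (Y : Finset α) (w : α)
    (hw2 : ∀ C ∈ 𝒞, w ∉ C.2) :
    cnfVal 𝒞 Y + Multiset.countP (fun C => w ∈ C.1 ∧ ¬ ClauseSat Y C) 𝒞
      ≤ cnfVal 𝒞 (insert w Y) := by
  unfold cnfVal
  rw [← countP_or_disjoint _ _ 𝒞 (fun C _ h => h.2.2 h.1)]
  refine countP_imp_le _ _ 𝒞 fun C hC h => ?_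
  rcases h with h | h
  · exact sat_insert (hw2 C hC) h
  · exact Or.inl ⟨w, Finset.mem_inter.2 ⟨h.1, Finset.mem_insert_self w Y⟩⟩

lemma deg_split (𝒞 : Multiset (Finset α × Finset α)) (Y : Finset α) (w : α)
    (hw2 : ∀ C ∈ 𝒞, w ∉ C.2) :
    cnfDeg 𝒞 w ≤ Multiset.countP (fun C => w ∈ C.1 ∪ C.2) (𝒞.filter (fun C => ClauseSat Y C))
      + Multiset.countP (fun C => w ∈ C.1 ∧ ¬ ClauseSat Y C) 𝒞 := by
  unfold cnfDeg
  rw [Multiset.countP_filter]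
  have h1 : Multiset.countP (fun C => w ∈ C.1 ∪ C.2) 𝒞 =
      Multiset.countP (fun C => (w ∈ C.1 ∪ C.2 ∧ ClauseSat Y C) ∨
        (w ∈ C.1 ∪ C.2 ∧ ¬ ClauseSat Y C)) 𝒞 :=
    countP_iff_eq _ _ 𝒞 (fun C _ => by tauto)
  rw [h1, countP_or_disjoint _ _ 𝒞 (fun C _ h => h.2.2 h.1.2)]
  refine Nat.add_le_add (le_of_eq (countP_iff_eq _ _ 𝒞 fun C _ => Iff.rfl))
    (countP_imp_le _ _ 𝒞 fun C hC h => ⟨?_, h.2⟩)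
  rcases Finset.mem_union.1 h.1 with h' | h'
  · exact h'
  · exact absurd h' (hw2 C hC)

end Helpers

section Counting

variable {α β : Type*} [DecidableEq α]

omit [DecidableEq α] in
lemma sum_countP_exchange (s : Finset α) (M : Multiset β) (P : α → β → Prop)
    [∀ v, DecidablePred (P v)] [∀ T, DecidablePred (fun v => P v T)] :
    ∑ v ∈ s, M.countP (P v) = (M.map (fun T => (s.filter (fun v => P v T)).card)).sum := by
  induction M using Multiset.induction with
  | empty => simp
  | cons a M ih =>
    simp only [Multiset.map_cons, Multiset.sum_cons]
    have : ∀ v ∈ s, (a ::ₘ M).countP (P v) = M.countP (P v) + if P v a then 1 else 0 :=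
      fun v _ => Multiset.countP_cons _ a M
    rw [Finset.sum_congr rfl this, Finset.sum_add_distrib, ih, ← Finset.card_filter]
    omega

lemma choose_ratio : ∀ (b s m : ℕ), b ≤ s → s ≤ m →
    m.choose b * (s - b + 1) ^ b ≤ s.choose b * m ^ b := by
  intro b
  induction b with
  | zero => intro s m _ _; simp
  | succ b ih =>
    intro s m hbs hm
    have hb' : b ≤ s := Nat.le_of_succ_le hbs
    have hIH := ih s m hb' hm
    have hrw : s - (b + 1) + 1 = s - b := by omega
    rw [hrw]
    refine Nat.le_of_mul_le_mul_left ?_ (Nat.succ_pos b)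
    have key1 : m.choose b * (s - b) ^ b ≤ s.choose b * m ^ b :=
      le_trans (Nat.mul_le_mul_left _ (Nat.pow_le_pow_left (by omega) b)) hIH
    calc (b + 1) * (m.choose (b + 1) * (s - b) ^ (b + 1))
        = (m.choose (b + 1) * (b + 1)) * ((s - b) ^ b * (s - b)) := by ring
      _ = (m.choose b * (m - b)) * ((s - b) ^ b * (s - b)) := by
          rw [Nat.choose_succ_right_eq]
      _ = (m.choose b * (s - b) ^ b) * ((m - b) * (s - b)) := by ring
      _ ≤ (s.choose b * m ^ b) * (m * (s - b)) :=
          Nat.mul_le_mul key1 (Nat.mul_le_mul_right _ (Nat.sub_le m b))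
      _ = (s.choose b * (s - b)) * (m ^ b * m) := by ring
      _ = (s.choose (b + 1) * (b + 1)) * m ^ (b + 1) := by
          rw [Nat.choose_succ_right_eq]; ring
      _ = (b + 1) * (s.choose (b + 1) * m ^ (b + 1)) := by ring

lemma counting_bad (𝒞 : Multiset (Finset α × Finset α)) (a b : ℕ) (ha : 1 ≤ a)
    (hfree : cnfKabFree 𝒞 a b)
    (A : Multiset (Finset α × Finset α)) (hA : A ≤ 𝒞)
    (s : ℕ) (hbs : b ≤ s) (Q : Finset α) :
    (Q.filter (fun v => s ≤ Multiset.countP (fun C => v ∈ C.1 ∪ C.2) A)).card * s.choose b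
      ≤ (a - 1) * (Multiset.card A).choose b := by
  classical
  set B := Q.filter (fun v => s ≤ Multiset.countP (fun C => v ∈ C.1 ∪ C.2) A) with hB
  have key : ∀ T ∈ Multiset.powersetCard b A,
      (B.filter (fun v => ∀ C ∈ T, v ∈ C.1 ∪ C.2)).card ≤ a - 1 := by
    intro T hT
    rw [Multiset.mem_powersetCard] at hT
    by_contra hcon
    push_neg at hcon
    have hale : a ≤ (B.filter (fun v => ∀ C ∈ T, v ∈ C.1 ∪ C.2)).card := by omega
    obtain ⟨S, hS, hScard⟩ := Finset.exists_subset_card_eq hale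
    exact hfree ⟨S, T, hScard, le_trans hT.1 hA, hT.2,
      fun C hC v hv => (Finset.mem_filter.1 (hS hv)).2 C hC⟩
  have lower : ∀ v ∈ B, s.choose b ≤
      (Multiset.powersetCard b A).countP (fun T => ∀ C ∈ T, v ∈ C.1 ∪ C.2) := by
    intro v hv
    have hdeg : s ≤ Multiset.countP (fun C => v ∈ C.1 ∪ C.2) A := (Finset.mem_filter.1 hv).2
    set Av := A.filter (fun C => v ∈ C.1 ∪ C.2) with hAv
    have hcardAv : s ≤ Multiset.card Av := by
      rwa [← Multiset.countP_eq_card_filter]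
    have h1 : s.choose b ≤ (Multiset.card Av).choose b := Nat.choose_le_choose b hcardAv
    have h2 : (Multiset.card Av).choose b =
        (Multiset.powersetCard b Av).countP (fun T => ∀ C ∈ T, v ∈ C.1 ∪ C.2) := by
      rw [← Multiset.card_powersetCard]
      refine (Multiset.countP_eq_card.2 ?_).symm
      intro T hT
      rw [Multiset.mem_powersetCard] at hT
      intro C hC
      have hmem : C ∈ Av := Multiset.mem_of_le hT.1 hC
      rw [hAv, Multiset.mem_filter] at hmem
      exact hmem.2
    have h3 : (Multiset.powersetCard b Av).countP (fun T => ∀ C ∈ T, v ∈ C.1 ∪ C.2)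
        ≤ (Multiset.powersetCard b A).countP (fun T => ∀ C ∈ T, v ∈ C.1 ∪ C.2) :=
      Multiset.countP_le_of_le _ (Multiset.powersetCard_mono b (Multiset.filter_le _ A))
    omega
  calc B.card * s.choose b = ∑ _v ∈ B, s.choose b := by
        rw [Finset.sum_const, smul_eq_mul]
    _ ≤ ∑ v ∈ B, (Multiset.powersetCard b A).countP (fun T => ∀ C ∈ T, v ∈ C.1 ∪ C.2) :=
        Finset.sum_le_sum lower
    _ = ((Multiset.powersetCard b A).map
          (fun T => (B.filter (fun v => ∀ C ∈ T, v ∈ C.1 ∪ C.2)).card)).sum :=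
        sum_countP_exchange _ _ _
    _ ≤ Multiset.card ((Multiset.powersetCard b A).map
          (fun T => (B.filter (fun v => ∀ C ∈ T, v ∈ C.1 ∪ C.2)).card)) • (a - 1) := by
        refine Multiset.sum_le_card_nsmul _ _ ?_
        intro x hx
        obtain ⟨T, hT, rfl⟩ := Multiset.mem_map.1 hx
        exact key T hT
    _ = (a - 1) * (Multiset.card A).choose b := by
        rw [Multiset.card_map, Multiset.card_powersetCard, smul_eq_mul, mul_comm]

end Counting

section Extra
variable {α : Type*} [DecidableEq α]

lemma deg_exists_le (𝒞 : Multiset (Finset α × Finset α)) (D : Finset α) :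
    Multiset.countP (fun C : Finset α × Finset α => ∃ d ∈ D, d ∈ C.1 ∪ C.2) 𝒞
      ≤ ∑ d ∈ D, cnfDeg 𝒞 d := by
  classical
  induction D using Finset.induction with
  | empty => simp [Multiset.countP_eq_zero]
  | @insert a E ha ih =>
    rw [Finset.sum_insert ha]
    have he : Multiset.countP (fun C : Finset α × Finset α => ∃ d ∈ insert a E, d ∈ C.1 ∪ C.2) 𝒞
        = Multiset.countP
          (fun C : Finset α × Finset α => a ∈ C.1 ∪ C.2 ∨ ∃ d ∈ E, d ∈ C.1 ∪ C.2) 𝒞 := by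
      refine countP_iff_eq _ _ 𝒞 fun C _ => ?_
      simp [Finset.mem_insert, or_and_right, exists_or]
    rw [he]
    calc _ ≤ Multiset.countP (fun C : Finset α × Finset α => a ∈ C.1 ∪ C.2) 𝒞 +
          Multiset.countP (fun C : Finset α × Finset α => ∃ d ∈ E, d ∈ C.1 ∪ C.2) 𝒞 :=
        countP_or_le _ _ 𝒞
      _ ≤ cnfDeg 𝒞 a + ∑ d ∈ E, cnfDeg 𝒞 d := Nat.add_le_add (le_of_eq rfl) ih

lemma val_drop_le (𝒞 : Multiset (Finset α × Finset α)) (X X₀ D : Finset α)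
    (hsub : X₀ ⊆ X) (hD : ∀ x ∈ X, x ∉ X₀ → x ∈ D) :
    cnfVal 𝒞 X ≤ cnfVal 𝒞 X₀ + ∑ d ∈ D, cnfDeg 𝒞 d := by
  classical
  have h1 : cnfVal 𝒞 X ≤
      Multiset.countP (fun C => ClauseSat X₀ C ∨ ∃ d ∈ D, d ∈ C.1 ∪ C.2) 𝒞 := by
    refine countP_imp_le _ _ 𝒞 fun C _ h => ?_
    rcases h with h | h
    · obtain ⟨x, hx⟩ := h
      rw [Finset.mem_inter] at hx
      by_cases hx0 : x ∈ X₀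
      · exact Or.inl (Or.inl ⟨x, Finset.mem_inter.2 ⟨hx.1, hx0⟩⟩)
      · exact Or.inr ⟨x, hD x hx.2 hx0, Finset.mem_union_left _ hx.1⟩
    · exact Or.inl (Or.inr fun hc => h fun y hy => hsub (hc hy))
  have h2 := countP_or_le (fun C => ClauseSat X₀ C)
    (fun C : Finset α × Finset α => ∃ d ∈ D, d ∈ C.1 ∪ C.2) 𝒞
  have h3 := deg_exists_le 𝒞 D
  have hc : cnfVal 𝒞 X₀ = Multiset.countP (fun C => ClauseSat X₀ C) 𝒞 := rfl
  omega

end Extra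

set_option maxHeartbeats 1000000 in
/-- keeping the negative variables together with a set `Q` of
high-degree positive variables preserves the optimum up to a factor `1 − ε`. -/
theorem stmt_10 {α : Type*} [DecidableEq α] (a b k : ℕ)
    (ha : 1 ≤ a) (hb : 1 ≤ b) (hk : 1 ≤ k)
    (ε : ℝ) (hε0 : 0 < ε) (hε1 : ε < 1 / 4)
    (V : Finset α) (𝒞 : Multiset (Finset α × Finset α))
    (h𝒞 : ∀ C ∈ 𝒞, C.1 ⊆ V ∧ C.2 ⊆ V)
    (hfree : cnfKabFree 𝒞 a b)
    (Vneg : Finset α)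
    (hVneg : ∀ v, v ∈ Vneg ↔ v ∈ V ∧ ∃ C ∈ 𝒞, v ∈ C.2)
    (τ : ℝ) (hτ : τ ≥ 2 * b / ε)
    (Q : Finset α) (hQV : Q ⊆ V)
    (hQpos : ∀ v ∈ Q, ∀ C ∈ 𝒞, v ∉ C.2)
    (hQcard : (Q.card : ℝ) ≥ k + a * (2 * k / ε) ^ b)
    (hQdeg : ∀ v ∈ Q, (cnfDeg 𝒞 v : ℝ) ≥ τ)
    (hout : ∀ u ∈ V, u ∉ Q → (∀ C ∈ 𝒞, u ∉ C.2) → (cnfDeg 𝒞 u : ℝ) ≤ τ) :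
    ∃ Y ⊆ Vneg ∪ Q, Y.card ≤ k ∧
      (cnfVal 𝒞 Y : ℝ) ≥ (1 - ε) * cnfOPT V 𝒞 k := by
  classical
  have hk0 : (0 : ℝ) < k := by exact_mod_cast hk
  have hb0 : (1 : ℝ) ≤ b := by exact_mod_cast hb
  have hτb : 2 * (b : ℝ) ≤ ε * τ := by
    have := (div_le_iff₀ hε0).1 hτ
    linarith [this]
  have hτ0 : (0 : ℝ) < τ := by
    have h1 : (0 : ℝ) < 2 * b / ε := by positivity
    linarith
  -- the optimal solution X
  have hne : (V.powerset.filter (fun Y => Y.card ≤ k)).Nonempty :=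
    ⟨∅, by simp⟩
  obtain ⟨X, hXmem, hXopt⟩ := Finset.exists_mem_eq_sup _ hne (cnfVal 𝒞)
  rw [Finset.mem_filter, Finset.mem_powerset] at hXmem
  obtain ⟨hXV, hXk⟩ := hXmem
  set U : Finset α := Vneg ∪ Q with hU
  set X₀ : Finset α := X ∩ U with hX₀def
  set D : Finset α := X \ U with hDdef
  set t : ℕ := D.card with htdef
  have hcardsplit : X₀.card + t = X.card := Finset.card_inter_add_card_sdiff X U
  have hX₀X : X₀ ⊆ X := Finset.inter_subset_left
  have htk : (t : ℝ) ≤ k := by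
    have : t ≤ k := by omega
    exact_mod_cast this
  have hDfacts : ∀ d ∈ D, (cnfDeg 𝒞 d : ℝ) ≤ τ := by
    intro d hd
    rw [hDdef, Finset.mem_sdiff] at hd
    have hdV : d ∈ V := hXV hd.1
    have hdnotU := hd.2
    rw [hU, Finset.mem_union] at hdnotU
    push_neg at hdnotU
    have hdpos : ∀ C ∈ 𝒞, d ∉ C.2 := by
      intro C hC hdC
      exact hdnotU.1 ((hVneg d).2 ⟨hdV, C, hC, hdC⟩)
    exact hout d hdV hdnotU.2 hdpos
  set f : ℝ := (cnfVal 𝒞 X₀ : ℝ) with hfdef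
  have hf0 : 0 ≤ f := Nat.cast_nonneg _
  have hOPTle : (cnfOPT V 𝒞 k : ℝ) ≤ f + t * τ := by
    have hnat := val_drop_le 𝒞 X X₀ D hX₀X
      (fun x hx hx0 => by rw [hDdef, Finset.mem_sdiff]; exact ⟨hx, fun hU' => hx0 (Finset.mem_inter.2 ⟨hx, hU'⟩)⟩)
    have hsum : (∑ d ∈ D, (cnfDeg 𝒞 d : ℝ)) ≤ t * τ := by
      rw [htdef]
      calc (∑ d ∈ D, (cnfDeg 𝒞 d : ℝ)) ≤ D.card • τ :=
          Finset.sum_le_card_nsmul D _ τ hDfacts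
        _ = D.card * τ := by rw [nsmul_eq_mul]
    have h1 : (cnfVal 𝒞 X : ℝ) ≤ f + ∑ d ∈ D, (cnfDeg 𝒞 d : ℝ) := by
      rw [hfdef]
      push_cast
      exact_mod_cast hnat
    have hOPTX : cnfOPT V 𝒞 k = cnfVal 𝒞 X := by unfold cnfOPT; exact hXopt
    rw [hOPTX]
    linarith
  -- parameters of the greedy choice
  set x' : ℝ := ε * (f + k * τ) / (2 * k) with hx'def
  have hx'pos : 0 < x' := by rw [hx'def]; positivity
  set c : ℕ := ⌈x'⌉₊ with hcdef
  have hc1 : 1 ≤ c := Nat.one_le_ceil_iff.2 hx'pos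
  have hcge : x' ≤ (c : ℝ) := Nat.le_ceil x'
  have hclt : (c : ℝ) < x' + 1 := Nat.ceil_lt_add_one hx'pos.le
  set s : ℕ := b + c - 1 with hsdef
  have hsb : b ≤ s := by omega
  have hscast : (s : ℝ) = (b : ℝ) + c - 1 := by
    rw [hsdef]
    have : (b + c - 1 : ℕ) = b + c - 1 := rfl
    push_cast [Nat.cast_sub (by omega : 1 ≤ b + c)]
    ring
  set g : ℝ := τ - b - x' with hgdef
  -- the greedy construction
  have grow : ∀ j : ℕ, j ≤ t → ∃ W : Finset α, W ⊆ Q ∧ W.card ≤ j ∧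
      f + j * g ≤ (cnfVal 𝒞 (X₀ ∪ W) : ℝ) := by
    intro j
    induction j with
    | zero =>
      intro _
      exact ⟨∅, Finset.empty_subset Q, le_refl 0, by simp [hfdef]⟩
    | succ j ih =>
      intro hjt
      obtain ⟨W, hWQ, hWcard, hWval⟩ := ih (by omega)
      set Yj : Finset α := X₀ ∪ W with hYjdef
      have hYjV : Yj ⊆ V := Finset.union_subset (hX₀X.trans hXV) (hWQ.trans hQV)
      have hYjk : Yj.card ≤ k := by
        calc Yj.card ≤ X₀.card + W.card := Finset.card_union_le X₀ W
          _ ≤ X₀.card + t := by omega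
          _ = X.card := hcardsplit
          _ ≤ k := hXk
      have hYjOPT : cnfVal 𝒞 Yj ≤ cnfOPT V 𝒞 k := by
        unfold cnfOPT
        exact Finset.le_sup (Finset.mem_filter.2 ⟨Finset.mem_powerset.2 hYjV, hYjk⟩)
      set A : Multiset (Finset α × Finset α) := 𝒞.filter (fun C => ClauseSat Yj C) with hAdef
      have hmA : Multiset.card A = cnfVal 𝒞 Yj := by
        rw [hAdef]; exact (Multiset.countP_eq_card_filter _ _).symm
      have hmle : (Multiset.card A : ℝ) ≤ f + k * τ := by
        rw [hmA]
        calc (cnfVal 𝒞 Yj : ℝ) ≤ (cnfOPT V 𝒞 k : ℝ) := by exact_mod_cast hYjOPT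
          _ ≤ f + t * τ := hOPTle
          _ ≤ f + k * τ := by nlinarith
      set Bad : Finset α :=
        Q.filter (fun v => s ≤ Multiset.countP (fun C => v ∈ C.1 ∪ C.2) A) with hBaddef
      have hBadR : (Bad.card : ℝ) ≤ ((a : ℝ) - 1) * (2 * k / ε) ^ b := by
        have hkε : (0 : ℝ) < 2 * k / ε := by positivity
        have hcpos : (0 : ℝ) < (c : ℝ) := by exact_mod_cast hc1
        have hmc : (Multiset.card A : ℝ) ≤ (2 * k / ε) * c := by
          have h1 : f + k * τ ≤ (2 * k / ε) * c := by
            have h2 : (2 * k / ε) * x' = f + k * τ := by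
              rw [hx'def]; field_simp
            nlinarith
          linarith
        by_cases hms : s ≤ Multiset.card A
        · have hratio := choose_ratio b s (Multiset.card A) hsb hms
          have hsbc : s - b + 1 = c := by
            have : ∀ b' c' : ℕ, 1 ≤ b' → 1 ≤ c' → (b' + c' - 1) - b' + 1 = c' := by
              intro b' c' h1 h2; omega
            rw [hsdef]; exact this b c hb hc1
          rw [hsbc] at hratio
          have hBadnat := counting_bad 𝒞 a b ha hfree A (Multiset.filter_le _ 𝒞) s hsb Q
          rw [← hBaddef] at hBadnat
          have h2 : (Bad.card * c ^ b) * s.choose b ≤ ((a - 1) * (Multiset.card A) ^ b) * s.choose b := by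
            calc (Bad.card * c ^ b) * s.choose b = (Bad.card * s.choose b) * c ^ b := by ring
              _ ≤ ((a - 1) * (Multiset.card A).choose b) * c ^ b :=
                Nat.mul_le_mul_right _ hBadnat
              _ = (a - 1) * ((Multiset.card A).choose b * c ^ b) := by ring
              _ ≤ (a - 1) * (s.choose b * (Multiset.card A) ^ b) :=
                Nat.mul_le_mul_left _ hratio
              _ = ((a - 1) * (Multiset.card A) ^ b) * s.choose b := by ring
          have h3 : Bad.card * c ^ b ≤ (a - 1) * (Multiset.card A) ^ b :=
            Nat.le_of_mul_le_mul_right h2 (Nat.choose_pos hsb)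
          have h3R : (Bad.card : ℝ) * (c : ℝ) ^ b ≤ ((a : ℝ) - 1) * (Multiset.card A : ℝ) ^ b := by
            have := h3
            have hcast : ((a - 1 : ℕ) : ℝ) = (a : ℝ) - 1 := by
              rw [Nat.cast_sub ha]; norm_num
            calc (Bad.card : ℝ) * (c : ℝ) ^ b = ((Bad.card * c ^ b : ℕ) : ℝ) := by push_cast; ring
              _ ≤ (((a - 1) * (Multiset.card A) ^ b : ℕ) : ℝ) := by exact_mod_cast this
              _ = ((a : ℝ) - 1) * (Multiset.card A : ℝ) ^ b := by
                push_cast [hcast]; ring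
          have h4 : ((a : ℝ) - 1) * (Multiset.card A : ℝ) ^ b
              ≤ ((a : ℝ) - 1) * ((2 * k / ε) ^ b * (c : ℝ) ^ b) := by
            have ha1R : (0 : ℝ) ≤ (a : ℝ) - 1 := by
              have : (1 : ℝ) ≤ a := by exact_mod_cast ha
              linarith
            refine mul_le_mul_of_nonneg_left ?_ ha1R
            calc (Multiset.card A : ℝ) ^ b ≤ ((2 * k / ε) * c) ^ b :=
                pow_le_pow_left₀ (Nat.cast_nonneg _) hmc b
              _ = (2 * k / ε) ^ b * (c : ℝ) ^ b := mul_pow _ _ b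
          have h5 : (Bad.card : ℝ) * (c : ℝ) ^ b ≤ (((a : ℝ) - 1) * (2 * k / ε) ^ b) * (c : ℝ) ^ b := by
            calc (Bad.card : ℝ) * (c : ℝ) ^ b ≤ ((a : ℝ) - 1) * (Multiset.card A : ℝ) ^ b := h3R
              _ ≤ (((a : ℝ) - 1) * (2 * k / ε) ^ b) * (c : ℝ) ^ b := by
                rw [mul_assoc]; exact h4
          exact le_of_mul_le_mul_right h5 (by positivity)
        · have hempty : Bad = ∅ := by
            rw [hBaddef]
            refine Finset.filter_eq_empty_iff.2 fun v _ => ?_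
            have := Multiset.countP_le_card (fun C => v ∈ C.1 ∪ C.2) A
            omega
          rw [hempty]
          simp only [Finset.card_empty, Nat.cast_zero]
          have ha1 : (0 : ℝ) ≤ (a : ℝ) - 1 := by
            have : (1 : ℝ) ≤ a := by exact_mod_cast ha
            linarith
          positivity
      -- the pool is nonempty
      have hpool : (Q \ (X₀ ∪ W ∪ Bad)).Nonempty := by
        rw [← Finset.card_pos]
        have hsub2 : Q ⊆ (Q \ (X₀ ∪ W ∪ Bad)) ∪ (X₀ ∪ W ∪ Bad) := by
          intro v hv
          rw [Finset.mem_union, Finset.mem_sdiff]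
          by_cases h : v ∈ X₀ ∪ W ∪ Bad
          · exact Or.inr h
          · exact Or.inl ⟨hv, h⟩
        have hcard2 : Q.card ≤ (Q \ (X₀ ∪ W ∪ Bad)).card + (X₀.card + W.card + Bad.card) := by
          calc Q.card ≤ ((Q \ (X₀ ∪ W ∪ Bad)) ∪ (X₀ ∪ W ∪ Bad)).card :=
              Finset.card_le_card hsub2
            _ ≤ (Q \ (X₀ ∪ W ∪ Bad)).card + (X₀ ∪ W ∪ Bad).card := Finset.card_union_le _ _
            _ ≤ (Q \ (X₀ ∪ W ∪ Bad)).card + ((X₀ ∪ W).card + Bad.card) := by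
              have := Finset.card_union_le (X₀ ∪ W) Bad
              omega
            _ ≤ (Q \ (X₀ ∪ W ∪ Bad)).card + (X₀.card + W.card + Bad.card) := by
              have := Finset.card_union_le X₀ W
              omega
        have hXW : (X₀.card : ℝ) + W.card ≤ k := by
          have h1 : X₀.card + W.card ≤ k := by omega
          exact_mod_cast h1
        have hpow : (0 : ℝ) < (2 * k / ε) ^ b := by positivity
        have hR : (0 : ℝ) < ((Q \ (X₀ ∪ W ∪ Bad)).card : ℝ) := by
          have hcard2R : (Q.card : ℝ) ≤ ((Q \ (X₀ ∪ W ∪ Bad)).card : ℝ)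
              + ((X₀.card : ℝ) + W.card + Bad.card) := by exact_mod_cast hcard2
          have haR : (1 : ℝ) ≤ a := by exact_mod_cast ha
          nlinarith [hQcard, hBadR, hXW]
        exact_mod_cast hR
      obtain ⟨w, hw⟩ := hpool
      rw [Finset.mem_sdiff] at hw
      obtain ⟨hwQ, hwnot⟩ := hw
      rw [Finset.mem_union, Finset.mem_union] at hwnot
      push_neg at hwnot
      obtain ⟨⟨hwX₀, hwW⟩, hwBad⟩ := hwnot
      have hwBad' : ¬ s ≤ Multiset.countP (fun C => w ∈ C.1 ∪ C.2) A := by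
        intro hcon
        exact hwBad (Finset.mem_filter.2 ⟨hwQ, hcon⟩)
      -- the gain of adding w
      have hw2 : ∀ C ∈ 𝒞, w ∉ C.2 := hQpos w hwQ
      have hgain1 := val_insert_ge 𝒞 Yj w hw2
      have hgain2 := deg_split 𝒞 Yj w hw2
      rw [← hAdef] at hgain2
      have hdegw : τ ≤ (cnfDeg 𝒞 w : ℝ) := hQdeg w hwQ
      set new : ℕ := Multiset.countP (fun C => w ∈ C.1 ∧ ¬ ClauseSat Yj C) 𝒞 with hnewdef
      have hnewR : τ - (b : ℝ) - x' ≤ (new : ℝ) := by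
        have hdA : (Multiset.countP (fun C => w ∈ C.1 ∪ C.2) A : ℝ) ≤ (s : ℝ) - 1 := by
          have h1 : Multiset.countP (fun C => w ∈ C.1 ∪ C.2) A + 1 ≤ s := by omega
          have h2 : ((Multiset.countP (fun C => w ∈ C.1 ∪ C.2) A + 1 : ℕ) : ℝ) ≤ (s : ℝ) := by
            exact_mod_cast h1
          push_cast at h2
          linarith
        have h3 : (cnfDeg 𝒞 w : ℝ) ≤ (Multiset.countP (fun C => w ∈ C.1 ∪ C.2) A : ℝ) + new := by
          exact_mod_cast hgain2
        rw [hscast] at hdA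
        linarith [hclt]
      have hval' : (cnfVal 𝒞 Yj : ℝ) + new ≤ (cnfVal 𝒞 (insert w Yj) : ℝ) := by
        exact_mod_cast hgain1
      refine ⟨insert w W, Finset.insert_subset hwQ hWQ, ?_, ?_⟩
      · calc (insert w W).card ≤ W.card + 1 := Finset.card_insert_le w W
          _ ≤ j + 1 := by omega
      · have hun : X₀ ∪ insert w W = insert w Yj := by
          rw [hYjdef, Finset.union_insert]
        rw [hun]
        have hng : g ≤ (new : ℝ) := by rw [hgdef]; linarith
        have hstep : f + (j : ℝ) * g + g ≤ (cnfVal 𝒞 (insert w Yj) : ℝ) := by linarith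
        have hcast : ((j + 1 : ℕ) : ℝ) = (j : ℝ) + 1 := by push_cast; ring
        rw [hcast]
        nlinarith [hstep]
  -- conclude
  obtain ⟨W, hWQ, hWcard, hWval⟩ := grow t (le_refl t)
  refine ⟨X₀ ∪ W, ?_, ?_, ?_⟩
  · refine Finset.union_subset ?_ ?_
    · rw [hX₀def]; exact Finset.inter_subset_right
    · exact hWQ.trans Finset.subset_union_right
  · calc (X₀ ∪ W).card ≤ X₀.card + W.card := Finset.card_union_le X₀ W
      _ ≤ X₀.card + t := by omega
      _ = X.card := hcardsplit
      _ ≤ k := hXk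
  · have hfinal : (1 - ε) * (f + t * τ) ≤ f + t * g := by
      rw [hgdef, hx'def]
      have hqmul : (ε * (f + k * τ) / (2 * k)) * (2 * k) = ε * (f + k * τ) := by
        field_simp
      have htn : (0 : ℝ) ≤ t := Nat.cast_nonneg t
      nlinarith [mul_nonneg (mul_nonneg hk0.le htn) (sub_nonneg.2 hτb),
        mul_le_mul_of_nonneg_right htk (mul_nonneg hε0.le hf0),
        mul_nonneg htn (mul_nonneg hε0.le hf0), mul_nonneg htn hτ0.le]
    have h1ε : (0 : ℝ) ≤ 1 - ε := by linarith
    calc (1 - ε) * (cnfOPT V 𝒞 k : ℝ) ≤ (1 - ε) * (f + t * τ) :=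
        mul_le_mul_of_nonneg_left hOPTle h1ε
      _ ≤ f + t * g := hfinal
      _ ≤ (cnfVal 𝒞 (X₀ ∪ W) : ℝ) := hWval
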